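/- Let X be a Delone set in ℝ^d of finite type. Then the additive subgroup [X] of ℝ^d generated by X is a finitely generated (hence free) group, and for every free ℤ-basis v₁,…,v_s of [X], the associated address map φ : [X] → ℤ^s is globally Lipschitz on X: there is a constant C₀ > 0 such that ‖φ(x) − φ(x')‖ ≤ C₀‖x − x'‖ for all x, x' ∈ X. -/

import Mathlib

open scoped Pointwise

noncomputable section

/-- `X` is uniformly discrete with parameter `r`: distinct points are at distance `≥ 2r`. -/
def UnifDiscrete {d : ℕ} (X : Set (EuclideanSpace ℝ (Fin d))) (r : ℝ) : Prop :=
  ∀ x ∈ X, ∀ y ∈ X, x ≠ y → 2 * r ≤ dist x y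

/-- `X` is relatively dense with parameter `R`: every closed ball of radius `R` meets `X`. -/
def RelDense {d : ℕ} (X : Set (EuclideanSpace ℝ (Fin d))) (R : ℝ) : Prop :=
  ∀ z : EuclideanSpace ℝ (Fin d), ∃ x ∈ X, dist z x ≤ R

/-- `X` is a Delone set. -/
def IsDelone {d : ℕ} (X : Set (EuclideanSpace ℝ (Fin d))) : Prop :=
  (∃ r > 0, UnifDiscrete X r) ∧ (∃ R > 0, RelDense X R)

/-- The address map associated to a free `ℤ`-basis of the subgroup `[X]` generated by `X`:
it sends `Σᵢ nᵢ vᵢ` to the coordinate vector `(n₁,…,n_s)`, viewed in `ℝ^s`. -/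
def address {d s : ℕ} {X : Set (EuclideanSpace ℝ (Fin d))}
    (b : Module.Basis (Fin s) ℤ (AddSubgroup.closure X)) (x : AddSubgroup.closure X) :
    EuclideanSpace ℝ (Fin s) := WithLp.toLp 2 (fun i => (b.repr x i : ℝ))

lemma chain_decomp {d : ℕ} {X : Set (EuclideanSpace ℝ (Fin d))} {R : ℝ} (hR : 0 < R)
    (hRd : RelDense X R) {x x' : EuclideanSpace ℝ (Fin d)} (hx : x ∈ X) (hx' : x' ∈ X) :
    ∃ N : ℕ, (N : ℝ) ≤ ‖x - x'‖ + 1 ∧ ∃ f : ℕ → EuclideanSpace ℝ (Fin d),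
      (∀ k < N, f k ∈ (X - X) ∩ Metric.ball 0 (2 * R + 2)) ∧
      x - x' = ∑ k ∈ Finset.range N, f k := by
  classical
  set v := x - x' with hv
  set N : ℕ := ⌈‖v‖⌉₊ with hN
  refine ⟨N, ?_, ?_⟩
  · exact (Nat.ceil_lt_add_one (norm_nonneg _)).le
  rcases eq_or_ne N 0 with h0 | h0
  · have : ‖v‖ ≤ 0 := Nat.ceil_eq_zero.mp h0
    have hv0 : v = 0 := by
      have := le_antisymm this (norm_nonneg v)
      simpa [norm_eq_zero] using this
    exact ⟨fun _ => 0, by simp [h0], by simp [h0, hv0]⟩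
  · have hNpos : 0 < (N : ℝ) := by positivity
    choose g hgX hgd using hRd
    set z : ℕ → EuclideanSpace ℝ (Fin d) := fun k => x' + ((k : ℝ) / N) • v with hz
    set y : ℕ → EuclideanSpace ℝ (Fin d) :=
      fun k => if k = 0 then x' else if k = N then x else g (z k) with hy
    have hyX : ∀ k, y k ∈ X := by
      intro k
      simp only [hy]
      split_ifs <;> first | exact hx' | exact hx | exact hgX _
    have hyd : ∀ k ≤ N, dist (y k) (z k) ≤ R := by
      intro k hk
      rcases eq_or_ne k 0 with rfl | hk0
      · simp [hy, hz, hR.le]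
      rcases eq_or_ne k N with rfl | hkN
      · have hzN : z N = x := by
          show x' + ((N : ℝ) / N) • v = x
          rw [div_self hNpos.ne', one_smul, hv]
          abel
        simp [hy, hk0, hzN, hR.le]
      · simp only [hy, if_neg hk0, if_neg hkN]
        rw [dist_comm]
        exact hgd _
    have hzd : ∀ k, dist (z (k + 1)) (z k) ≤ 1 := by
      intro k
      have hzk : z (k + 1) = z k + ((1 : ℝ) / N) • v := by
        simp only [hz]
        push_cast
        rw [add_div, add_smul]
        abel
      rw [hzk, dist_eq_norm, add_sub_cancel_left, norm_smul]
      have h1 : ‖v‖ ≤ (N : ℝ) := Nat.le_ceil _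
      rw [Real.norm_eq_abs, abs_of_nonneg (by positivity)]
      rw [div_mul_eq_mul_div, one_mul, div_le_one hNpos]
      exact h1
    refine ⟨fun k => y (k + 1) - y k, ?_, ?_⟩
    · intro k hk
      constructor
      · exact Set.sub_mem_sub (hyX _) (hyX _)
      · rw [Metric.mem_ball, dist_zero_right, ← dist_eq_norm]
        have h1 := hyd (k + 1) (by omega)
        have h2 := hyd k (by omega)
        have h3 := hzd k
        calc dist (y (k + 1)) (y k) ≤ dist (y (k + 1)) (z (k + 1)) + dist (z (k + 1)) (z k)
              + dist (z k) (y k) := dist_triangle4 _ _ _ _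
          _ ≤ R + 1 + R := by
              have h2a : dist (z k) (y k) ≤ R := by rw [dist_comm]; exact h2
              exact add_le_add (add_le_add h1 h3) h2a
          _ < 2 * R + 2 := by linarith
    · rw [Finset.sum_range_sub (fun k => y k)]
      have hy0 : y 0 = x' := by simp [hy]
      have hyN : y N = x := by simp [hy, h0]
      rw [hy0, hyN]

lemma address_add {d s : ℕ} {X : Set (EuclideanSpace ℝ (Fin d))}
    (b : Module.Basis (Fin s) ℤ (AddSubgroup.closure X)) (u v : AddSubgroup.closure X) :
    address b (u + v) = address b u + address b v := by
  ext i
  show ((b.repr (u + v)) i : ℝ) = ((b.repr u) i : ℝ) + ((b.repr v) i : ℝ)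
  rw [map_add]
  push_cast [Finsupp.add_apply]
  ring


/-- For a Delone set of finite type, the subgroup `[X]` generated by `X` is finitely generated,
and every address map is globally Lipschitz on `X`. -/
theorem finite_type_address_lipschitz {d : ℕ} (X : Set (EuclideanSpace ℝ (Fin d)))
    (hX : IsDelone X) (hft : ∀ T > 0, ((X - X) ∩ Metric.ball 0 T).Finite) :
    (AddSubgroup.closure X).FG ∧
    ∀ (s : ℕ) (b : Module.Basis (Fin s) ℤ (AddSubgroup.closure X)),
      ∃ C₀ > 0, ∀ x (hx : x ∈ X) x' (hx' : x' ∈ X),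
        ‖address b ⟨x, AddSubgroup.subset_closure hx⟩ -
          address b ⟨x', AddSubgroup.subset_closure hx'⟩‖ ≤ C₀ * ‖x - x'‖ := by
  classical
  obtain ⟨⟨r, hr, hud⟩, ⟨R, hR, hRd⟩⟩ := hX
  obtain ⟨x₀, hx₀, -⟩ := hRd 0
  have hT : (0 : ℝ) < 2 * R + 2 := by linarith
  have hFfin : ((X - X) ∩ Metric.ball 0 (2 * R + 2)).Finite := hft _ hT
  have hFsub : (X - X) ∩ Metric.ball 0 (2 * R + 2) ⊆ ↑(AddSubgroup.closure X) := by
    rintro w ⟨⟨a, ha, c, hc, rfl⟩, -⟩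
    exact sub_mem (AddSubgroup.subset_closure ha) (AddSubgroup.subset_closure hc)
  constructor
  · refine ⟨insert x₀ hFfin.toFinset, le_antisymm ?_ ?_⟩
    · rw [AddSubgroup.closure_le]
      intro w hw
      simp only [Finset.coe_insert, Set.mem_insert_iff, Set.Finite.coe_toFinset] at hw
      rcases hw with rfl | hw
      · exact AddSubgroup.subset_closure hx₀
      · exact hFsub hw
    · rw [AddSubgroup.closure_le]
      intro w hw
      obtain ⟨N, -, f, hf, hsum⟩ := chain_decomp hR hRd hw hx₀
      have h1 : w = (∑ k ∈ Finset.range N, f k) + x₀ := by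
        rw [← hsum]; abel
      rw [h1]
      refine add_mem (AddSubgroup.sum_mem _ fun k hk => ?_) (AddSubgroup.subset_closure ?_)
      · apply AddSubgroup.subset_closure
        simp only [Finset.coe_insert, Set.mem_insert_iff, Set.Finite.coe_toFinset]
        exact Or.inr (hf k (Finset.mem_range.mp hk))
      · simp
  · intro s b
    set F := (X - X) ∩ Metric.ball 0 (2 * R + 2) with hF
    set A : EuclideanSpace ℝ (Fin d) → ℝ := fun w =>
      if h : w ∈ AddSubgroup.closure X then ‖address b ⟨w, h⟩‖ else 0 with hA
    obtain ⟨M, hM⟩ := (hFfin.image A).bddAbove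
    set Mp : ℝ := max M 0 + 1 with hMp
    have hMp0 : 0 < Mp := by positivity
    have hkey : ∀ w ∈ F, ∀ h : w ∈ AddSubgroup.closure X, ‖address b ⟨w, h⟩‖ ≤ Mp := by
      intro w hw h
      have h1 : A w ≤ M := hM (Set.mem_image_of_mem A hw)
      have h2 : A w = ‖address b ⟨w, h⟩‖ := by rw [hA]; exact dif_pos h
      rw [← h2]
      calc A w ≤ M := h1
        _ ≤ max M 0 := le_max_left _ _
        _ ≤ Mp := by rw [hMp]; linarith
    refine ⟨Mp * (1 + 1 / (2 * r)), by positivity, ?_⟩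
    intro x hx x' hx'
    rcases eq_or_ne x x' with rfl | hne
    · simp
    obtain ⟨N, hNle, f, hf, hsum⟩ := chain_decomp hR hRd hx hx'
    set Φ : AddSubgroup.closure X →+ EuclideanSpace ℝ (Fin s) :=
      AddMonoidHom.mk' (address b) (address_add b) with hΦ
    set u : ℕ → AddSubgroup.closure X := fun k =>
      if h : f k ∈ AddSubgroup.closure X then ⟨f k, h⟩ else 0 with hu
    have hucoe : ∀ k < N, (u k : EuclideanSpace ℝ (Fin d)) = f k := by
      intro k hk
      have hm : f k ∈ AddSubgroup.closure X := hFsub (hf k hk)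
      rw [hu]
      simp only
      rw [dif_pos hm]
    have hdiff : (⟨x, AddSubgroup.subset_closure hx⟩ - ⟨x', AddSubgroup.subset_closure hx'⟩ :
        AddSubgroup.closure X) = ∑ k ∈ Finset.range N, u k := by
      apply Subtype.ext
      push_cast
      rw [hsum]
      exact (Finset.sum_congr rfl fun k hk => (hucoe k (Finset.mem_range.mp hk)).symm)
    have hstep : ∀ k ∈ Finset.range N, ‖Φ (u k)‖ ≤ Mp := by
      intro k hk
      have hk' := Finset.mem_range.mp hk
      have hmem : f k ∈ AddSubgroup.closure X := hFsub (hf k hk')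
      have : u k = ⟨f k, hmem⟩ := by
        apply Subtype.ext
        exact hucoe k hk'
      rw [this]
      exact hkey (f k) (hf k hk') hmem
    have hnorm : ‖address b ⟨x, AddSubgroup.subset_closure hx⟩ -
        address b ⟨x', AddSubgroup.subset_closure hx'⟩‖ ≤ (N : ℝ) * Mp := by
      have h1 : address b ⟨x, AddSubgroup.subset_closure hx⟩ -
          address b ⟨x', AddSubgroup.subset_closure hx'⟩ =
          Φ (∑ k ∈ Finset.range N, u k) := by
        rw [← hdiff, map_sub]
        rfl
      rw [h1, map_sum]
      calc ‖∑ k ∈ Finset.range N, Φ (u k)‖ ≤ ∑ k ∈ Finset.range N, ‖Φ (u k)‖ :=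
            norm_sum_le _ _
        _ ≤ ∑ _k ∈ Finset.range N, Mp := Finset.sum_le_sum hstep
        _ = (N : ℝ) * Mp := by rw [Finset.sum_const, Finset.card_range, nsmul_eq_mul]
    have hnn : 2 * r ≤ ‖x - x'‖ := by
      rw [← dist_eq_norm]; exact hud x hx x' hx' hne
    have hquot : (N : ℝ) ≤ ‖x - x'‖ * (1 + 1 / (2 * r)) := by
      have h1 : 1 ≤ ‖x - x'‖ / (2 * r) := (one_le_div (by positivity)).mpr hnn
      have h2 : ‖x - x'‖ * (1 + 1 / (2 * r)) = ‖x - x'‖ + ‖x - x'‖ / (2 * r) := by ring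
      rw [h2]
      linarith
    calc ‖address b ⟨x, AddSubgroup.subset_closure hx⟩ -
        address b ⟨x', AddSubgroup.subset_closure hx'⟩‖ ≤ (N : ℝ) * Mp := hnorm
      _ ≤ (‖x - x'‖ * (1 + 1 / (2 * r))) * Mp := by
          exact mul_le_mul_of_nonneg_right hquot hMp0.le
      _ = Mp * (1 + 1 / (2 * r)) * ‖x - x'‖ := by ring
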